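/- arXiv:1604.02769 — 5 statements merged into one kernel-verified Lean document; each statement's English description precedes it below -/
import Mathlib

section
/- Cheap upper bound: Let A be an m×n real matrix and for a finite index set L define α_L = sup over nonzero z with Az = 0 of (∑_{i∈L}|z_i|)/(∑_i |z_i|). Then for any index set K with |K| = k and any 1 ≤ l ≤ k, α_K ≤ (1/C(k-1,l-1)) · ∑_{L ⊆ K, |L| = l} α_L, assuming the null space of A is nontrivial so the suprema are attained or finite. -/
open Finset

noncomputable def alphaS {m n : ℕ} (A : Matrix (Fin m) (Fin n) ℝ) (S : Finset (Fin n)) : ℝ :=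
  sSup {r : ℝ | ∃ z : Fin n → ℝ, A.mulVec z = 0 ∧ z ≠ 0 ∧
    r = (∑ i ∈ S, |z i|) / (∑ i, |z i|)}

lemma abs_sum_pos {n : ℕ} {z : Fin n → ℝ} (hz : z ≠ 0) : 0 < ∑ i, |z i| := by
  have : ∃ i, z i ≠ 0 := by
    by_contra h
    push_neg at h
    exact hz (funext h)
  obtain ⟨i, hi⟩ := this
  exact Finset.sum_pos' (fun j _ => abs_nonneg _) ⟨i, Finset.mem_univ i, abs_pos.2 hi⟩

lemma ratio_mem_le_one {n : ℕ} (S : Finset (Fin n)) (z : Fin n → ℝ) (hz : z ≠ 0) :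
    (∑ i ∈ S, |z i|) / (∑ i, |z i|) ≤ 1 := by
  rw [div_le_one (abs_sum_pos hz)]
  exact Finset.sum_le_sum_of_subset_of_nonneg (S.subset_univ) (fun i _ _ => abs_nonneg _)

lemma alphaS_bddAbove {m n : ℕ} (A : Matrix (Fin m) (Fin n) ℝ) (S : Finset (Fin n)) :
    BddAbove {r : ℝ | ∃ z : Fin n → ℝ, A.mulVec z = 0 ∧ z ≠ 0 ∧
      r = (∑ i ∈ S, |z i|) / (∑ i, |z i|)} := by
  refine ⟨1, fun r hr => ?_⟩
  obtain ⟨z, _, hz, rfl⟩ := hr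
  exact ratio_mem_le_one S z hz

lemma ratio_le_alphaS {m n : ℕ} (A : Matrix (Fin m) (Fin n) ℝ) (S : Finset (Fin n))
    (z : Fin n → ℝ) (hAz : A.mulVec z = 0) (hz : z ≠ 0) :
    (∑ i ∈ S, |z i|) / (∑ i, |z i|) ≤ alphaS A S :=
  le_csSup (alphaS_bddAbove A S) ⟨z, hAz, hz, rfl⟩

lemma alphaS_nonneg {m n : ℕ} (A : Matrix (Fin m) (Fin n) ℝ)
    (hN : ∃ z : Fin n → ℝ, A.mulVec z = 0 ∧ z ≠ 0) (S : Finset (Fin n)) :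
    0 ≤ alphaS A S := by
  obtain ⟨z, hAz, hz⟩ := hN
  refine le_trans ?_ (ratio_le_alphaS A S z hAz hz)
  positivity

lemma count_aux {α : Type*} [DecidableEq α] (K : Finset α) (i : α) (hi : i ∈ K)
    (l : ℕ) (hl : 1 ≤ l) :
    ((K.powersetCard l).filter (fun L => i ∈ L)).card = (K.card - 1).choose (l - 1) := by
  rw [← Finset.card_erase_of_mem hi, ← Finset.card_powersetCard]
  apply Finset.card_bij (fun L _ => L.erase i)
  · intro L hL
    simp only [Finset.mem_filter, Finset.mem_powersetCard] at hL
    obtain ⟨⟨hsub, hcard⟩, hiL⟩ := hL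
    simp only [Finset.mem_powersetCard]
    constructor
    · exact Finset.erase_subset_erase i hsub
    · rw [Finset.card_erase_of_mem hiL, hcard]
  · intro L₁ hL₁ L₂ hL₂ h
    simp only [Finset.mem_filter] at hL₁ hL₂
    rw [← Finset.insert_erase hL₁.2, ← Finset.insert_erase hL₂.2, h]
  · intro L hL
    simp only [Finset.mem_powersetCard] at hL
    refine ⟨insert i L, ?_, ?_⟩
    · simp only [Finset.mem_filter, Finset.mem_powersetCard]
      have hiL : i ∉ L := fun h => (Finset.notMem_erase i K) (hL.1 h)
      refine ⟨⟨?_, ?_⟩, Finset.mem_insert_self i L⟩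
      · exact Finset.insert_subset hi (hL.1.trans (Finset.erase_subset i K))
      · rw [Finset.card_insert_of_notMem hiL, hL.2]
        omega
    · rw [Finset.erase_insert (fun h => (Finset.notMem_erase i K) (hL.1 h))]

lemma double_count {α : Type*} [DecidableEq α] (K : Finset α) (l : ℕ) (hl : 1 ≤ l)
    (f : α → ℝ) :
    ∑ L ∈ K.powersetCard l, ∑ i ∈ L, f i
      = ((K.card - 1).choose (l - 1) : ℝ) * ∑ i ∈ K, f i := by
  have : ∀ L ∈ K.powersetCard l, ∑ i ∈ L, f i = ∑ i ∈ K, if i ∈ L then f i else 0 := by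
    intro L hL
    rw [Finset.mem_powersetCard] at hL
    rw [Finset.sum_ite_mem, Finset.inter_eq_right.2 hL.1]
  rw [Finset.sum_congr rfl this, Finset.sum_comm]
  rw [Finset.mul_sum]
  apply Finset.sum_congr rfl
  intro i hi
  rw [← Finset.sum_filter, Finset.sum_const, count_aux K i hi l hl, nsmul_eq_mul]

theorem stmt_1 {m n k l : ℕ} (A : Matrix (Fin m) (Fin n) ℝ)
    (hN : ∃ z : Fin n → ℝ, A.mulVec z = 0 ∧ z ≠ 0)
    (K : Finset (Fin n)) (hK : K.card = k) (hl : 1 ≤ l) (hlk : l ≤ k) :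
    alphaS A K ≤ (1 / ((k - 1).choose (l - 1) : ℝ)) *
      ∑ L ∈ K.powersetCard l, alphaS A L := by
  have hC : 0 < ((k - 1).choose (l - 1) : ℝ) := by
    have : 0 < (k - 1).choose (l - 1) := Nat.choose_pos (by omega)
    exact_mod_cast this
  apply Real.sSup_le
  · rintro r ⟨z, hAz, hz, rfl⟩
    have hT : 0 < ∑ i, |z i| := abs_sum_pos hz
    have key : (∑ i ∈ K, |z i|) / (∑ i, |z i|)
        = (1 / ((k - 1).choose (l - 1) : ℝ)) *
          ∑ L ∈ K.powersetCard l, (∑ i ∈ L, |z i|) / (∑ i, |z i|) := by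
      rw [← Finset.sum_div, double_count K l hl, hK]
      field_simp
    rw [key]
    apply mul_le_mul_of_nonneg_left _ (by positivity)
    apply Finset.sum_le_sum
    intro L hL
    exact ratio_le_alphaS A L z hAz hz
  · apply mul_nonneg (by positivity)
    exact Finset.sum_nonneg fun L _ => alphaS_nonneg A hN L
end

section
/- Scaling bound: α_k ≤ (k/l) · α_l for any integers 1 ≤ l ≤ k ≤ n, where α_j denotes the maximum over all subsets of size at most j of the proportion parameter. -/
open Finset

noncomputable def alphaK {m n : ℕ} (A : Matrix (Fin m) (Fin n) ℝ) (k : ℕ) : ℝ :=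
  sSup {r : ℝ | ∃ K : Finset (Fin n), K.card ≤ k ∧ r = alphaS A K}

/-- Averaging/greedy lemma: inside any finset one can find a subset of size `l`
capturing at least an `l / card` proportion of the (nonnegative) sum. -/
lemma exists_subset_prop {n : ℕ} (f : Fin n → ℝ) (hf : ∀ i, 0 ≤ f i) :
    ∀ (l : ℕ) (K : Finset (Fin n)), l ≤ K.card →
      ∃ L ⊆ K, L.card = l ∧
        (l : ℝ) * ∑ i ∈ K, f i ≤ (K.card : ℝ) * ∑ i ∈ L, f i := by
  intro l
  induction l with
  | zero =>
      intro K _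
      refine ⟨∅, Finset.empty_subset _, rfl, ?_⟩
      simp
  | succ l ih =>
      intro K hK
      obtain ⟨L, hLK, hLcard, hLsum⟩ := ih K (le_trans (Nat.le_succ l) hK)
      have hcardlt : L.card < K.card := by omega
      have hsd : (K \ L).Nonempty := by
        rw [Finset.sdiff_nonempty]
        intro h
        exact absurd (Finset.card_le_card h) (not_le.mpr hcardlt)
      set c : ℝ := (K.card : ℝ) with hc
      set S : ℝ := ∑ i ∈ K, f i with hS
      set T : ℝ := ∑ i ∈ L, f i with hT
      have hsdiffsum : ∑ i ∈ K \ L, f i = S - T := by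
        have := Finset.sum_sdiff (f := f) hLK
        linarith
      have hlK : l ≤ K.card := by omega
      have hclcard : ((K \ L).card : ℝ) = c - l := by
        rw [Finset.card_sdiff_of_subset hLK, hLcard, hc, Nat.cast_sub hlK]
      -- there is an element of `K \ L` at least the average of `K \ L`
      obtain ⟨i, hiKL, hile⟩ := Finset.exists_le_of_sum_le hsd
        (f := fun _ => (S - T) / (c - l)) (g := f)
        (by
          rw [Finset.sum_const, hsdiffsum, nsmul_eq_mul, hclcard]
          have hcl : (0 : ℝ) < c - l := by
            have : (l : ℝ) < c := by rw [hc]; exact_mod_cast hLcard ▸ hcardlt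
            linarith
          rw [mul_div_cancel₀ _ (ne_of_gt hcl)])
      have hiK : i ∈ K := (Finset.mem_sdiff.mp hiKL).1
      have hiL : i ∉ L := (Finset.mem_sdiff.mp hiKL).2
      refine ⟨insert i L, Finset.insert_subset hiK hLK, ?_, ?_⟩
      · rw [Finset.card_insert_of_notMem hiL, hLcard]
      · rw [Finset.sum_insert hiL]
        have hcl : (0 : ℝ) < c - l := by
          have : (l : ℝ) < c := by rw [hc]; exact_mod_cast hlK.lt_of_ne (by omega)
          linarith
        have hfi : S - T ≤ (c - l) * f i := by
          rw [div_le_iff₀ hcl] at hile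
          linarith
        have hT0 : 0 ≤ T := Finset.sum_nonneg fun i _ => hf i
        have hS0 : 0 ≤ S := Finset.sum_nonneg fun i _ => hf i
        have hcl1 : (l : ℝ) + 1 ≤ c := by
          rw [hc]
          have h2 : l + 1 ≤ K.card := by omega
          exact_mod_cast h2
        push_cast
        nlinarith [mul_le_mul_of_nonneg_left hfi (by linarith : (0:ℝ) ≤ c),
          mul_nonneg hcl.le hT0, mul_le_mul_of_nonneg_right hLsum (by linarith : (0:ℝ) ≤ c - l - 1)]

theorem stmt_3 {m n k l : ℕ} (A : Matrix (Fin m) (Fin n) ℝ)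
    (hN : ∃ z : Fin n → ℝ, A.mulVec z = 0 ∧ z ≠ 0)
    (hl : 1 ≤ l) (hlk : l ≤ k) (hkn : k ≤ n) :
    alphaK A k ≤ ((k : ℝ) / (l : ℝ)) * alphaK A l := by
  classical
  -- basic facts
  have hsumpos : ∀ z : Fin n → ℝ, z ≠ 0 → 0 < ∑ i, |z i| := by
    intro z hz
    obtain ⟨i, hi⟩ := Function.ne_iff.mp hz
    exact Finset.sum_pos' (fun j _ => abs_nonneg _)
      ⟨i, Finset.mem_univ i, abs_pos.mpr hi⟩
  have hmem_le_one : ∀ (S : Finset (Fin n)) (r : ℝ),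
      (∃ z : Fin n → ℝ, A.mulVec z = 0 ∧ z ≠ 0 ∧
        r = (∑ i ∈ S, |z i|) / (∑ i, |z i|)) → r ≤ 1 := by
    intro S r ⟨z, _, hz, hr⟩
    rw [hr]
    apply div_le_one_of_le₀
    · exact Finset.sum_le_sum_of_subset_of_nonneg (Finset.subset_univ S)
        (fun i _ _ => abs_nonneg _)
    · exact (hsumpos z hz).le
  have hbdd : ∀ S : Finset (Fin n), BddAbove {r : ℝ | ∃ z : Fin n → ℝ,
      A.mulVec z = 0 ∧ z ≠ 0 ∧ r = (∑ i ∈ S, |z i|) / (∑ i, |z i|)} := by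
    intro S
    exact ⟨1, fun r hr => hmem_le_one S r hr⟩
  have halphaS_le_one : ∀ S : Finset (Fin n), alphaS A S ≤ 1 := by
    intro S
    exact Real.sSup_le (fun r hr => hmem_le_one S r hr) zero_le_one
  have hbddK : ∀ j : ℕ, BddAbove {r : ℝ | ∃ K : Finset (Fin n),
      K.card ≤ j ∧ r = alphaS A K} := by
    intro j
    exact ⟨1, fun r ⟨K, _, hr⟩ => hr ▸ halphaS_le_one K⟩
  have halphaS_le_alphaK : ∀ (j : ℕ) (K : Finset (Fin n)), K.card ≤ j →
      alphaS A K ≤ alphaK A j := by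
    intro j K hKj
    exact le_csSup (hbddK j) ⟨K, hKj, rfl⟩
  obtain ⟨z₀, hz₀A, hz₀⟩ := hN
  have halphaS_nonneg : ∀ S : Finset (Fin n), 0 ≤ alphaS A S := by
    intro S
    have hmem : (∑ i ∈ S, |z₀ i|) / (∑ i, |z₀ i|) ∈ {r : ℝ | ∃ z : Fin n → ℝ,
        A.mulVec z = 0 ∧ z ≠ 0 ∧ r = (∑ i ∈ S, |z i|) / (∑ i, |z i|)} :=
      ⟨z₀, hz₀A, hz₀, rfl⟩
    have := le_csSup (hbdd S) hmem
    refine le_trans ?_ this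
    exact div_nonneg (Finset.sum_nonneg fun i _ => abs_nonneg _) (hsumpos z₀ hz₀).le
  have halphaK_l_nonneg : 0 ≤ alphaK A l :=
    le_trans (halphaS_nonneg ∅) (halphaS_le_alphaK l ∅ (by simp))
  have hkl_nonneg : (0 : ℝ) ≤ (k : ℝ) / (l : ℝ) :=
    div_nonneg (Nat.cast_nonneg k) (Nat.cast_nonneg l)
  have hrhs_nonneg : 0 ≤ ((k : ℝ) / (l : ℝ)) * alphaK A l :=
    mul_nonneg hkl_nonneg halphaK_l_nonneg
  have hlpos : (0 : ℝ) < (l : ℝ) := by exact_mod_cast hl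
  -- main bound
  apply Real.sSup_le _ hrhs_nonneg
  rintro r ⟨K, hKk, rfl⟩
  apply Real.sSup_le _ hrhs_nonneg
  rintro x ⟨z, hzA, hz, rfl⟩
  set g : Fin n → ℝ := fun i => |z i| with hg
  have hg0 : ∀ i, 0 ≤ g i := fun i => abs_nonneg _
  have hT : 0 < ∑ i, g i := hsumpos z hz
  -- find a good subset L
  have hexL : ∃ L ⊆ K, L.card ≤ l ∧
      (l : ℝ) * ∑ i ∈ K, g i ≤ (k : ℝ) * ∑ i ∈ L, g i := by
    by_cases hcase : l ≤ K.card
    · obtain ⟨L, hLK, hLcard, hLsum⟩ := exists_subset_prop g hg0 l K hcase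
      refine ⟨L, hLK, le_of_eq hLcard, le_trans hLsum ?_⟩
      apply mul_le_mul_of_nonneg_right _ (Finset.sum_nonneg fun i _ => hg0 i)
      exact_mod_cast hKk
    · refine ⟨K, Finset.Subset.refl K, (by omega : K.card ≤ l), ?_⟩
      apply mul_le_mul_of_nonneg_right _ (Finset.sum_nonneg fun i _ => hg0 i)
      exact_mod_cast hlk
  obtain ⟨L, hLK, hLl, hLsum⟩ := hexL
  have hstep1 : (∑ i ∈ K, g i) / (∑ i, g i) ≤
      ((k : ℝ) / (l : ℝ)) * ((∑ i ∈ L, g i) / (∑ i, g i)) := by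
    rw [div_mul_div_comm, div_le_div_iff₀ hT (by positivity)]
    have h1 : (∑ i ∈ K, g i) * ((l : ℝ) * ∑ i, g i) =
        ((l : ℝ) * ∑ i ∈ K, g i) * ∑ i, g i := by ring
    rw [h1]
    apply mul_le_mul_of_nonneg_right hLsum hT.le
  have hstep2 : (∑ i ∈ L, g i) / (∑ i, g i) ≤ alphaS A L :=
    le_csSup (hbdd L) ⟨z, hzA, hz, rfl⟩
  have hstep3 : alphaS A L ≤ alphaK A l := halphaS_le_alphaK l L hLl
  calc (∑ i ∈ K, g i) / (∑ i, g i)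
      ≤ ((k : ℝ) / (l : ℝ)) * ((∑ i ∈ L, g i) / (∑ i, g i)) := hstep1
    _ ≤ ((k : ℝ) / (l : ℝ)) * alphaK A l :=
        mul_le_mul_of_nonneg_left (le_trans hstep2 hstep3) hkl_nonneg
end

section
/- Feasibility of the uniform coefficients in the optimized pick-l program: fix K* ⊆ {1,...,n} with |K*| = k and l with 1 ≤ l ≤ k. Define γ_L = 1/C(k−1,l−1) if L ⊆ K* with |L| = l, and γ_L = 0 otherwise. Then (i) γ_L ≥ 0 for all l-subsets L; (ii) ∑_L γ_L = k/l; (iii) for every integer b with 1 ≤ b ≤ l and every b-element set B, ∑_{L ⊇ B, |L| = l} γ_L ≤ C(k−b, l−b)/C(k−1, l−1). -/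
open Finset

theorem stmt_11 {n k l : ℕ} (hl : 1 ≤ l) (hlk : l ≤ k) (hkn : k ≤ n)
    (Kstar : Finset (Fin n)) (hK : Kstar.card = k)
    (γ : Finset (Fin n) → ℝ)
    (hγ : ∀ L : Finset (Fin n),
      γ L = if L ⊆ Kstar ∧ L.card = l then 1 / ((k - 1).choose (l - 1) : ℝ) else 0) :
    (∀ L : Finset (Fin n), 0 ≤ γ L) ∧
    (∑ L ∈ (Finset.univ : Finset (Fin n)).powersetCard l, γ L = (k : ℝ) / (l : ℝ)) ∧
    (∀ b : ℕ, ∀ B : Finset (Fin n), 1 ≤ b → b ≤ l → B.card = b →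
      ∑ L ∈ ((Finset.univ : Finset (Fin n)).powersetCard l).filter (fun L => B ⊆ L), γ L ≤
        ((k - b).choose (l - b) : ℝ) / ((k - 1).choose (l - 1) : ℝ)) := by
  have hc0 : 0 < (((k - 1).choose (l - 1) : ℕ) : ℝ) := by
    exact_mod_cast Nat.choose_pos (Nat.sub_le_sub_right hlk 1)
  have hsum : ∀ s : Finset (Finset (Fin n)), (∀ L ∈ s, L.card = l) →
      ∑ L ∈ s, γ L =
        ((s.filter (fun L => L ⊆ Kstar)).card : ℝ) * (1 / ((k - 1).choose (l - 1) : ℝ)) := by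
    intro s hs
    have : ∑ L ∈ s, γ L =
        ∑ L ∈ s, (if L ⊆ Kstar then (1 / ((k - 1).choose (l - 1) : ℝ)) else 0) := by
      refine Finset.sum_congr rfl fun L hL => ?_
      rw [hγ L]
      by_cases h : L ⊆ Kstar <;> simp [h, hs L hL]
    rw [this, ← Finset.sum_filter, Finset.sum_const, nsmul_eq_mul]
  refine ⟨?_, ?_, ?_⟩
  · intro L
    rw [hγ L]
    split
    · positivity
    · exact le_rfl
  · rw [hsum _ (fun L hL => (Finset.mem_powersetCard.mp hL).2)]
    have hfil : ((Finset.univ : Finset (Fin n)).powersetCard l).filter (fun L => L ⊆ Kstar)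
        = Kstar.powersetCard l := by
      ext L
      simp [Finset.mem_powersetCard, and_comm]
    rw [hfil, Finset.card_powersetCard, hK]
    have key : k * (k - 1).choose (l - 1) = k.choose l * l := by
      have hk1 : 1 ≤ k := hl.trans hlk
      have := Nat.add_one_mul_choose_eq (k - 1) (l - 1)
      rwa [Nat.sub_add_cancel hk1, Nat.sub_add_cancel hl] at this
    have hl0 : (l : ℝ) ≠ 0 := by positivity
    field_simp
    exact_mod_cast key.symm.trans (Nat.mul_comm _ _)
  · intro b B hb hbl hB
    rw [hsum _ (fun L hL => (Finset.mem_powersetCard.mp (Finset.mem_filter.mp hL).1).2)]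
    set T := ((((Finset.univ : Finset (Fin n)).powersetCard l).filter
        (fun L => B ⊆ L)).filter (fun L => L ⊆ Kstar)) with hT
    have hTcard : T.card ≤ (k - b).choose (l - b) := by
      by_cases hBK : B ⊆ Kstar
      · have := Finset.card_le_card_of_injOn (s := T)
          (t := (Kstar \ B).powersetCard (l - b)) (fun L => L \ B) ?_ ?_
        · rwa [Finset.card_powersetCard, Finset.card_sdiff_of_subset hBK, hK, hB] at this
        · intro L hL
          obtain ⟨hL1, hLK⟩ := Finset.mem_filter.mp hL
          obtain ⟨hLu, hBL⟩ := Finset.mem_filter.mp hL1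
          have hcard : L.card = l := (Finset.mem_powersetCard.mp hLu).2
          rw [Finset.mem_coe, Finset.mem_powersetCard]
          exact ⟨Finset.sdiff_subset_sdiff hLK (le_refl B),
            by rw [Finset.card_sdiff_of_subset hBL, hcard, hB]⟩
        · intro L1 h1 L2 h2 h
          have hB1 : B ⊆ L1 := (Finset.mem_filter.mp (Finset.mem_filter.mp h1).1).2
          have hB2 : B ⊆ L2 := (Finset.mem_filter.mp (Finset.mem_filter.mp h2).1).2
          have h' : L1 \ B = L2 \ B := h
          have : L1 \ B ∪ B = L2 \ B ∪ B := by rw [h']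
          rwa [Finset.sdiff_union_of_subset hB1, Finset.sdiff_union_of_subset hB2] at this
      · have : T = ∅ := by
          rw [Finset.eq_empty_iff_forall_notMem]
          intro L hL
          obtain ⟨hL1, hLK⟩ := Finset.mem_filter.mp hL
          exact hBK ((Finset.mem_filter.mp hL1).2.trans hLK)
        rw [this]
        simp
    calc (T.card : ℝ) * (1 / ((k - 1).choose (l - 1) : ℝ))
        ≤ ((k - b).choose (l - b) : ℝ) * (1 / ((k - 1).choose (l - 1) : ℝ)) := by
          apply mul_le_mul_of_nonneg_right (by exact_mod_cast hTcard)
          positivity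
      _ = ((k - b).choose (l - b) : ℝ) / ((k - 1).choose (l - 1) : ℝ) := by ring
end

section
/- Dual characterization of the singleton proportion parameter: for each index i, min over y ∈ ℝ^m of ‖e_i − Aᵀ y‖_∞ equals max over x with Ax = 0 and ‖x‖_1 ≤ 1 of e_iᵀ x, and this common value equals α_{{i}} (the proportion parameter of the singleton {i}). -/
open Finset

private lemma iSup_abs_eq_norm' {n : ℕ} [Nonempty (Fin n)] (v : Fin n → ℝ) :
    (⨆ t, |v t|) = ‖v‖ := by
  have hbdd : BddAbove (Set.range fun t => |v t|) := Set.Finite.bddAbove (Set.finite_range _)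
  apply le_antisymm
  · exact ciSup_le fun t => by rw [← Real.norm_eq_abs]; exact norm_le_pi_norm v t
  · have h0 : (0:ℝ) ≤ ⨆ t, |v t| :=
      le_ciSup_of_le hbdd (Classical.arbitrary _) (abs_nonneg _)
    refine (pi_norm_le_iff_of_nonneg h0).2 fun t => ?_
    rw [Real.norm_eq_abs]
    exact le_ciSup hbdd t

theorem stmt_15 {m n : ℕ} (A : Matrix (Fin m) (Fin n) ℝ) (i : Fin n) :
    sInf {r : ℝ | ∃ y : Fin m → ℝ,
        r = ⨆ t : Fin n, |(if t = i then (1 : ℝ) else 0) - A.transpose.mulVec y t|} =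
      sSup {r : ℝ | ∃ x : Fin n → ℝ, A.mulVec x = 0 ∧ (∑ j, |x j|) ≤ 1 ∧ r = x i} ∧
    sSup {r : ℝ | ∃ x : Fin n → ℝ, A.mulVec x = 0 ∧ (∑ j, |x j|) ≤ 1 ∧ r = x i} =
      sSup {r : ℝ | ∃ x : Fin n → ℝ, A.mulVec x = 0 ∧ (∑ j, |x j|) ≤ 1 ∧ r = |x i|} := by
  classical
  haveI : Nonempty (Fin n) := ⟨i⟩
  set e : Fin n → ℝ := fun t => if t = i then (1:ℝ) else 0 with he
  set S : Set ℝ := {r : ℝ | ∃ x : Fin n → ℝ, A.mulVec x = 0 ∧ (∑ j, |x j|) ≤ 1 ∧ r = x i}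
    with hSdef
  set S2 : Set ℝ := {r : ℝ | ∃ x : Fin n → ℝ, A.mulVec x = 0 ∧ (∑ j, |x j|) ≤ 1 ∧ r = |x i|}
    with hS2def
  set T : Set ℝ := {r : ℝ | ∃ y : Fin m → ℝ,
      r = ⨆ t : Fin n, |(if t = i then (1 : ℝ) else 0) - A.transpose.mulVec y t|} with hTdef
  -- basic facts
  have hS0 : (0:ℝ) ∈ S := ⟨0, by simp [Matrix.mulVec_zero]⟩
  have hSbdd : BddAbove S := by
    refine ⟨1, fun r hr => ?_⟩
    obtain ⟨x, _, hx1, rfl⟩ := hr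
    calc x i ≤ |x i| := le_abs_self _
      _ ≤ ∑ j, |x j| := Finset.single_le_sum (f := fun j => |x j|)
            (fun j _ => abs_nonneg _) (mem_univ i)
      _ ≤ 1 := hx1
  -- weak duality
  have weak : ∀ r ∈ T, ∀ s ∈ S, s ≤ r := by
    rintro r ⟨y, rfl⟩ s ⟨x, hx0, hx1, rfl⟩
    set v : Fin n → ℝ := fun t => (if t = i then (1:ℝ) else 0) - A.transpose.mulVec y t with hv
    have hsup : (⨆ t : Fin n, |(if t = i then (1:ℝ) else 0) - A.transpose.mulVec y t|) = ‖v‖ :=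
      iSup_abs_eq_norm' v
    rw [hsup]
    have h1 : ∑ t, A.transpose.mulVec y t * x t = 0 := by
      have : ∑ t, A.transpose.mulVec y t * x t = ∑ k, (A.mulVec x k) * y k := by
        simp only [Matrix.mulVec, dotProduct, Matrix.transpose_apply, Finset.sum_mul]
        rw [Finset.sum_comm]
        exact Finset.sum_congr rfl fun k _ => Finset.sum_congr rfl fun t _ => by ring
      rw [this, hx0]; simp
    have h2 : x i = ∑ t, v t * x t := by
      have h3 : ∑ t, (if t = i then (1:ℝ) else 0) * x t = x i := by
        simp [ite_mul]
      calc x i = ∑ t, (if t = i then (1:ℝ) else 0) * x t - ∑ t, A.transpose.mulVec y t * x t := by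
            rw [h3, h1]; ring
        _ = ∑ t, v t * x t := by
              rw [← Finset.sum_sub_distrib]
              exact Finset.sum_congr rfl fun t _ => by simp only [hv]; ring
    rw [h2]
    calc ∑ t, v t * x t ≤ ∑ t, ‖v‖ * |x t| := by
          refine Finset.sum_le_sum fun t _ => ?_
          calc v t * x t ≤ |v t * x t| := le_abs_self _
            _ = |v t| * |x t| := abs_mul _ _
            _ ≤ ‖v‖ * |x t| := by
                have : |v t| ≤ ‖v‖ := by rw [← Real.norm_eq_abs]; exact norm_le_pi_norm v t
                exact mul_le_mul_of_nonneg_right this (abs_nonneg _)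
      _ = ‖v‖ * ∑ t, |x t| := by rw [Finset.mul_sum]
      _ ≤ ‖v‖ * 1 := mul_le_mul_of_nonneg_left hx1 (norm_nonneg _)
      _ = ‖v‖ := mul_one _
  have hT0 : ∃ r, r ∈ T := ⟨_, ⟨0, rfl⟩⟩
  have hTbddBelow : BddBelow T := by
    refine ⟨0, fun r hr => ?_⟩
    obtain ⟨y, rfl⟩ := hr
    exact le_ciSup_of_le (Set.Finite.bddAbove (Set.finite_range _)) i (abs_nonneg _)
  have hle : sSup S ≤ sInf T :=
    le_csInf hT0 fun r hr => csSup_le ⟨0, hS0⟩ fun s hs => weak r hr s hs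
  -- strong duality
  set R : Submodule ℝ (Fin n → ℝ) := LinearMap.range (Matrix.mulVecLin A.transpose) with hR
  haveI : IsClosed (R : Set (Fin n → ℝ)) := Submodule.closed_of_finiteDimensional R
  obtain ⟨g, hg1, hg2⟩ := exists_dual_vector'' ℝ (Submodule.Quotient.mk e : (Fin n → ℝ) ⧸ R)
  set c : Fin n → ℝ := fun t => g (R.mkQ (fun j => if t = j then (1:ℝ) else 0)) with hc
  have ha : ∀ x : Fin n → ℝ, g (R.mkQ x) = ∑ t, x t * c t := by
    intro x
    conv_lhs => rw [pi_eq_sum_univ x]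
    rw [map_sum, map_sum]
    exact Finset.sum_congr rfl fun t _ => by rw [map_smul, map_smul, smul_eq_mul]
  have hb : A.mulVec c = 0 := by
    funext k
    have hw : (fun t => A k t) ∈ R := by
      refine ⟨Pi.single k 1, ?_⟩
      funext t
      simp [Matrix.mulVecLin_apply, Matrix.mulVec, dotProduct, Pi.single_apply]
    have : g (R.mkQ (fun t => A k t)) = 0 := by
      rw [Submodule.mkQ_apply, (Submodule.Quotient.mk_eq_zero R).2 hw, map_zero]
    have h4 := ha (fun t => A k t)
    rw [this] at h4
    simp only [Matrix.mulVec, dotProduct, Pi.zero_apply]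
    exact h4.symm
  have hcb : ∑ t, |c t| ≤ 1 := by
    set s : Fin n → ℝ := fun t => if 0 ≤ c t then 1 else -1 with hs
    have h5 : ∑ t, s t * c t = ∑ t, |c t| := by
      refine Finset.sum_congr rfl fun t _ => ?_
      by_cases h : 0 ≤ c t <;> simp [hs, h, abs_of_nonneg, abs_of_neg, lt_of_not_ge]
    have h6 : ‖s‖ ≤ 1 := by
      refine (pi_norm_le_iff_of_nonneg zero_le_one).2 fun t => ?_
      by_cases h : 0 ≤ c t <;> simp [hs, h]
    calc ∑ t, |c t| = g (R.mkQ s) := by rw [ha s, h5]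
      _ ≤ ‖g (R.mkQ s)‖ := le_abs_self _
      _ ≤ ‖g‖ * ‖R.mkQ s‖ := g.le_opNorm _
      _ ≤ 1 * 1 := by
          refine mul_le_mul hg1 ?_ (norm_nonneg _) zero_le_one
          exact le_trans (Submodule.Quotient.norm_mk_le R s) h6
      _ = 1 := mul_one 1
  have hci : c i = ‖(Submodule.Quotient.mk e : (Fin n → ℝ) ⧸ R)‖ := by
    have h7 := ha e
    rw [Submodule.mkQ_apply, hg2] at h7
    have h8 : ∑ t, e t * c t = c i := by simp [he, ite_mul]
    rw [← h8]
    exact_mod_cast h7.symm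
  have hdle : ‖(Submodule.Quotient.mk e : (Fin n → ℝ) ⧸ R)‖ ≤ sSup S := by
    rw [← hci]
    exact le_csSup hSbdd ⟨c, hb, hcb, rfl⟩
  have hge : sInf T ≤ sSup S := by
    refine le_of_forall_pos_le_add fun ε hε => ?_
    obtain ⟨w, hw1, hw2⟩ :=
      Submodule.Quotient.norm_mk_lt (Submodule.Quotient.mk e : (Fin n → ℝ) ⧸ R) hε
    obtain ⟨y, hy⟩ := (Submodule.Quotient.eq R).1 hw1
    -- w - e = Aᵀ *ᵥ y, so e - Aᵀ *ᵥ (-y) = w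
    have hmem : (⨆ t : Fin n, |(if t = i then (1:ℝ) else 0) - A.transpose.mulVec (-y) t|) ∈ T :=
      ⟨-y, rfl⟩
    have hval : (⨆ t : Fin n, |(if t = i then (1:ℝ) else 0) - A.transpose.mulVec (-y) t|) = ‖w‖ := by
      have hwe : (fun t => (if t = i then (1:ℝ) else 0) - A.transpose.mulVec (-y) t) = w := by
        funext t
        have := congrFun hy t
        simp only [Matrix.mulVecLin_apply] at this
        rw [Matrix.mulVec_neg]
        simp only [Pi.neg_apply, Pi.sub_apply] at this ⊢
        have het : e t = (if t = i then (1:ℝ) else 0) := rfl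
        rw [← het]
        linarith [this]
      rw [show (⨆ t : Fin n, |(if t = i then (1:ℝ) else 0) - A.transpose.mulVec (-y) t|)
          = ⨆ t : Fin n, |(fun t => (if t = i then (1:ℝ) else 0) - A.transpose.mulVec (-y) t) t|
          from rfl, hwe, iSup_abs_eq_norm' w]
    calc sInf T ≤ ‖w‖ := hval ▸ csInf_le hTbddBelow hmem
      _ ≤ ‖(Submodule.Quotient.mk e : (Fin n → ℝ) ⧸ R)‖ + ε := le_of_lt hw2
      _ ≤ sSup S + ε := by linarith [hdle]
  constructor
  · exact le_antisymm hge hle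
  · -- sSup S = sSup S2
    have hS2bdd : BddAbove S2 := by
      refine ⟨1, fun r hr => ?_⟩
      obtain ⟨x, _, hx1, rfl⟩ := hr
      calc |x i| ≤ ∑ j, |x j| := Finset.single_le_sum (f := fun j => |x j|)
            (fun j _ => abs_nonneg _) (mem_univ i)
        _ ≤ 1 := hx1
    apply le_antisymm
    · refine csSup_le ⟨0, hS0⟩ fun r hr => ?_
      obtain ⟨x, hx0, hx1, rfl⟩ := hr
      exact le_csSup_of_le hS2bdd ⟨x, hx0, hx1, rfl⟩ (le_abs_self _)
    · refine csSup_le ⟨0, ⟨0, by simp [Matrix.mulVec_zero]⟩⟩ fun r hr => ?_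
      obtain ⟨x, hx0, hx1, rfl⟩ := hr
      by_cases h : 0 ≤ x i
      · exact le_csSup hSbdd ⟨x, hx0, hx1, (abs_of_nonneg h)⟩
      · refine le_csSup hSbdd ⟨-x, ?_, ?_, ?_⟩
        · rw [Matrix.mulVec_neg, hx0, neg_zero]
        · simpa using hx1
        · simp [abs_of_neg (lt_of_not_ge h)]
end

section
/- LP bound dominated by pick-1 bound: for any matrix Y ∈ ℝ^{m×n} with columns y_1,...,y_n, define α_k^{LP}(Y) = max_{1≤j≤n} ‖(I − YᵀA)e_j‖_{k,1} where ‖x‖_{k,1} is the sum of the k largest magnitudes of entries of x. Then inf_Y α_k^{LP}(Y) ≤ the pick-1 upper bound, i.e., inf_Y α_k^{LP}(Y) ≤ sum of the k largest values among {α_{{1}},...,α_{{n}}}, where α_{{i}} = min_{y∈ℝ^m} ‖e_i − Aᵀy‖_∞. -/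
open Finset

theorem stmt_16 {m n k : ℕ} (A : Matrix (Fin m) (Fin n) ℝ) (hk : 1 ≤ k) (hkn : k ≤ n) :
    sInf {v : ℝ | ∃ Y : Matrix (Fin m) (Fin n) ℝ,
        v = ⨆ j : Fin n, sSup {r : ℝ | ∃ K : Finset (Fin n), K.card = k ∧
          r = ∑ i ∈ K, |((1 : Matrix (Fin n) (Fin n) ℝ) - Matrix.transpose Y * A) i j|}} ≤
      sSup {r : ℝ | ∃ K : Finset (Fin n), K.card = k ∧
        r = ∑ i ∈ K, sInf {s : ℝ | ∃ y : Fin m → ℝ,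
          s = ⨆ t : Fin n, |(if t = i then (1 : ℝ) else 0) - A.transpose.mulVec y t|}} := by
  have hn : 0 < n := lt_of_lt_of_le hk hkn
  haveI : Nonempty (Fin n) := ⟨⟨0, hn⟩⟩
  -- generic finiteness of such sets
  have hfin : ∀ f : Finset (Fin n) → ℝ,
      ({r : ℝ | ∃ K : Finset (Fin n), K.card = k ∧ r = f K}).Finite := by
    intro f
    have : {r : ℝ | ∃ K : Finset (Fin n), K.card = k ∧ r = f K}
        = f '' {K : Finset (Fin n) | K.card = k} := by
      ext r; simp [Set.image, eq_comm]
    rw [this]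
    exact (Set.toFinite _).image f
  obtain ⟨K0, -, hK0⟩ := Finset.exists_subset_card_eq
    (s := (Finset.univ : Finset (Fin n))) (by simpa using hkn)
  set α : Fin n → ℝ := fun i => sInf {s : ℝ | ∃ y : Fin m → ℝ,
      s = ⨆ t : Fin n, |(if t = i then (1 : ℝ) else 0) - A.transpose.mulVec y t|} with hαdef
  set T : Set ℝ := {r : ℝ | ∃ K : Finset (Fin n), K.card = k ∧ r = ∑ i ∈ K, α i} with hT
  have hTfin : T.Finite := hfin _
  have hsum_le_T : ∀ K : Finset (Fin n), K.card = k → ∑ i ∈ K, α i ≤ sSup T := by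
    intro K hK
    exact le_csSup hTfin.bddAbove ⟨K, hK, rfl⟩
  -- bounded below by 0 fact for the LHS set
  have hlow : ∀ v ∈ {v : ℝ | ∃ Y : Matrix (Fin m) (Fin n) ℝ,
      v = ⨆ j : Fin n, sSup {r : ℝ | ∃ K : Finset (Fin n), K.card = k ∧
        r = ∑ i ∈ K, |((1 : Matrix (Fin n) (Fin n) ℝ) - Matrix.transpose Y * A) i j|}},
      (0 : ℝ) ≤ v := by
    rintro v ⟨Y, rfl⟩
    have h0 : ∀ j : Fin n, (0 : ℝ) ≤ sSup {r : ℝ | ∃ K : Finset (Fin n), K.card = k ∧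
        r = ∑ i ∈ K, |((1 : Matrix (Fin n) (Fin n) ℝ) - Matrix.transpose Y * A) i j|} := by
      intro j
      have hmem : (∑ i ∈ K0, |((1 : Matrix (Fin n) (Fin n) ℝ) - Matrix.transpose Y * A) i j|)
          ∈ {r : ℝ | ∃ K : Finset (Fin n), K.card = k ∧
            r = ∑ i ∈ K, |((1 : Matrix (Fin n) (Fin n) ℝ) - Matrix.transpose Y * A) i j|} :=
        ⟨K0, hK0, rfl⟩
      refine le_trans ?_ (le_csSup (hfin _).bddAbove hmem)
      positivity
    obtain ⟨j0⟩ := (inferInstance : Nonempty (Fin n))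
    calc (0 : ℝ) ≤ sSup {r : ℝ | ∃ K : Finset (Fin n), K.card = k ∧
        r = ∑ i ∈ K, |((1 : Matrix (Fin n) (Fin n) ℝ) - Matrix.transpose Y * A) i j0|} :=
          h0 j0
      _ ≤ _ := by
          apply le_ciSup (f := fun j => sSup {r : ℝ | ∃ K : Finset (Fin n), K.card = k ∧
            r = ∑ i ∈ K, |((1 : Matrix (Fin n) (Fin n) ℝ) - Matrix.transpose Y * A) i j|})
          exact (Set.finite_range _).bddAbove
  refine le_of_forall_pos_le_add ?_
  intro ε hε
  have hkpos : (0 : ℝ) < k := by exact_mod_cast hk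
  have hεk : 0 < ε / k := div_pos hε hkpos
  -- choose near-optimal y i
  have hy : ∀ i : Fin n, ∃ y0 : Fin m → ℝ,
      (⨆ t : Fin n, |(if t = i then (1 : ℝ) else 0) - A.transpose.mulVec y0 t|) < α i + ε / k := by
    intro i
    have hne : {s : ℝ | ∃ y : Fin m → ℝ,
        s = ⨆ t : Fin n, |(if t = i then (1 : ℝ) else 0) - A.transpose.mulVec y t|}.Nonempty :=
      ⟨_, ⟨0, rfl⟩⟩
    obtain ⟨a, ⟨y0, rfl⟩, hlt⟩ := Real.lt_sInf_add_pos hne hεk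
    exact ⟨y0, hlt⟩
  choose y hy using hy
  set Y : Matrix (Fin m) (Fin n) ℝ := fun s i => y i s with hYdef
  have hentry : ∀ i j : Fin n,
      ((1 : Matrix (Fin n) (Fin n) ℝ) - Matrix.transpose Y * A) i j
        = (if j = i then (1 : ℝ) else 0) - A.transpose.mulVec (y i) j := by
    intro i j
    simp [Matrix.sub_apply, Matrix.one_apply, Matrix.mul_apply, Matrix.transpose_apply,
      Matrix.mulVec, dotProduct, eq_comm, mul_comm]
    rfl
  have hbound : ∀ i j : Fin n,
      |((1 : Matrix (Fin n) (Fin n) ℝ) - Matrix.transpose Y * A) i j| ≤ α i + ε / k := by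
    intro i j
    rw [hentry i j]
    refine le_trans ?_ (hy i).le
    exact le_ciSup (f := fun t : Fin n =>
      |(if t = i then (1 : ℝ) else 0) - A.transpose.mulVec (y i) t|)
      (Set.finite_range _).bddAbove j
  have hsup : ∀ j : Fin n, sSup {r : ℝ | ∃ K : Finset (Fin n), K.card = k ∧
      r = ∑ i ∈ K, |((1 : Matrix (Fin n) (Fin n) ℝ) - Matrix.transpose Y * A) i j|}
      ≤ sSup T + ε := by
    intro j
    refine csSup_le ⟨_, ⟨K0, hK0, rfl⟩⟩ ?_
    rintro r ⟨K, hK, rfl⟩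
    calc ∑ i ∈ K, |((1 : Matrix (Fin n) (Fin n) ℝ) - Matrix.transpose Y * A) i j|
        ≤ ∑ i ∈ K, (α i + ε / k) := Finset.sum_le_sum fun i _ => hbound i j
      _ = (∑ i ∈ K, α i) + ε := by
          rw [Finset.sum_add_distrib, Finset.sum_const, hK, nsmul_eq_mul,
            mul_div_cancel₀ _ (ne_of_gt hkpos)]
      _ ≤ sSup T + ε := add_le_add_left (hsum_le_T K hK) ε
  have hv : (⨆ j : Fin n, sSup {r : ℝ | ∃ K : Finset (Fin n), K.card = k ∧
      r = ∑ i ∈ K, |((1 : Matrix (Fin n) (Fin n) ℝ) - Matrix.transpose Y * A) i j|})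
      ≤ sSup T + ε := ciSup_le hsup
  refine le_trans (csInf_le ⟨0, hlow⟩ ⟨Y, rfl⟩) hv
end
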